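/- arXiv:1309.7934 — 2 statements merged into one kernel-verified Lean document; each statement's English description precedes it below -/
import Mathlib

section
/- If two infinite binary sequences x and y have maximal common prefix w (i.e., x = w·a·… and y = w·ā·… with a ≠ ā), then for every n ≥ 0, the sequences H^n(x) and H^n(y) agree on exactly their first |H^n(w)| + F_{n+2} − 2 symbols. -/
/-- Fibonacci substitution on finite words: H(0)=01, H(1)=0 (0 ↦ `false`, 1 ↦ `true`). -/
def Hword : List Bool → List Bool
  | [] => []
  | false :: t => false :: true :: Hword t
  | true :: t => false :: Hword t

/-- Paper-indexed Fibonacci numbers, shifted by 2: `fibP k = F_{k-2}`, so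
`fibP 0 = F_{-2} = 1`, `fibP 1 = F_{-1} = 0`, `fibP 2 = F_0 = 1`, `fibP 3 = F_1 = 1`, … -/
def fibP : ℕ → ℕ
  | 0 => 1
  | 1 => 0
  | n + 2 => fibP (n + 1) + fibP n

/-- Fibonacci substitution on infinite binary sequences. -/
def Hseq (x : ℕ → Bool) : ℕ → Bool :=
  fun n => (Hword ((List.range (n + 1)).map x)).getD n false

/-- The left shift on infinite binary sequences. -/
def shift (x : ℕ → Bool) : ℕ → Bool := fun n => x (n + 1)

lemma Hword_append (u v : List Bool) : Hword (u ++ v) = Hword u ++ Hword v := by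
  induction u with
  | nil => rfl
  | cons a t ih => cases a <;> simp [Hword, ih]

lemma Hword_length_ge (l : List Bool) : l.length ≤ (Hword l).length := by
  induction l with
  | nil => simp
  | cons a t ih => cases a <;> simp [Hword] <;> omega

lemma getD_append_cons (l : List Bool) (c : Bool) (r : List Bool) :
    (l ++ c :: r).getD l.length false = c := by
  induction l with
  | nil => rfl
  | cons a t ih => simpa [List.getD_cons_succ] using ih

lemma getD_stable (x : ℕ → Bool) (k d n : ℕ)
    (h : n < (Hword ((List.range k).map x)).length) :
    (Hword ((List.range (k + d)).map x)).getD n false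
      = (Hword ((List.range k).map x)).getD n false := by
  rw [List.range_add, List.map_append, Hword_append, List.getD_append _ _ _ _ h]

lemma Hseq_eq_getD (x : ℕ → Bool) (k n : ℕ)
    (h : n < (Hword ((List.range k).map x)).length) :
    Hseq x n = (Hword ((List.range k).map x)).getD n false := by
  have h1 : n < (Hword ((List.range (n + 1)).map x)).length := by
    have := Hword_length_ge ((List.range (n + 1)).map x)
    simp at this; omega
  show (Hword ((List.range (n + 1)).map x)).getD n false = _
  rcases le_total k (n + 1) with hk | hk
  · obtain ⟨d, hd⟩ := Nat.exists_eq_add_of_le hk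
    rw [hd, getD_stable x k d n h]
  · obtain ⟨d, hd⟩ := Nat.exists_eq_add_of_le hk
    conv_rhs => rw [hd, getD_stable x (n + 1) d n h1]

lemma prefix_succ (x : ℕ → Bool) (m : ℕ) :
    (List.range (m + 1)).map x = (List.range m).map x ++ [x m] := by
  rw [List.range_succ, List.map_append]; rfl

lemma Hword_singleton_false : Hword [false] = [false, true] := rfl
lemma Hword_singleton_true : Hword [true] = [false] := rfl

lemma Hword_cons_false_head (c : Bool) : ∃ r, Hword [c] = false :: r := by
  cases c
  · exact ⟨[true], rfl⟩
  · exact ⟨[], rfl⟩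

/-- The symbol of `Hseq x` right after the image of the prefix of length `m` is `0`. -/
lemma Hseq_at_len (x : ℕ → Bool) (m : ℕ) :
    Hseq x ((Hword ((List.range m).map x)).length) = false := by
  obtain ⟨r, hr⟩ := Hword_cons_false_head (x m)
  have hsplit : Hword ((List.range (m + 1)).map x)
      = Hword ((List.range m).map x) ++ false :: r := by
    rw [prefix_succ, Hword_append, hr]
  have hb : (Hword ((List.range m).map x)).length
      < (Hword ((List.range (m + 1)).map x)).length := by
    rw [hsplit]; simp
  rw [Hseq_eq_getD x (m + 1) _ hb, hsplit, getD_append_cons]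

/-- The next symbol after that is the negation of `x m`. -/
lemma Hseq_at_len_succ (x : ℕ → Bool) (m : ℕ) :
    Hseq x ((Hword ((List.range m).map x)).length + 1) = !(x m) := by
  cases hxm : x m
  · -- x m = false : H(w ++ [0]) = Hw ++ [0,1], symbol at p+1 is 1 = !false
    have hsplit : Hword ((List.range (m + 1)).map x)
        = (Hword ((List.range m).map x) ++ [false]) ++ true :: [] := by
      rw [prefix_succ, Hword_append, hxm, Hword_singleton_false]; simp
    have hb : (Hword ((List.range m).map x)).length + 1
        < (Hword ((List.range (m + 1)).map x)).length := by
      rw [hsplit]; simp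
    rw [Hseq_eq_getD x (m + 1) _ hb, hsplit]
    have hl : (Hword ((List.range m).map x)).length + 1
        = (Hword ((List.range m).map x) ++ [false]).length := by simp
    rw [hl, getD_append_cons]
    rfl
  · -- x m = true : H(w ++ [1, c]) = Hw ++ [0] ++ (0 :: r), symbol at p+1 is 0 = !true
    obtain ⟨r, hr⟩ := Hword_cons_false_head (x (m + 1))
    have hsplit : Hword ((List.range (m + 2)).map x)
        = (Hword ((List.range m).map x) ++ [false]) ++ false :: r := by
      rw [prefix_succ, prefix_succ, Hword_append, Hword_append, hxm,
        Hword_singleton_true, hr]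
    have hb : (Hword ((List.range m).map x)).length + 1
        < (Hword ((List.range (m + 2)).map x)).length := by
      rw [hsplit]; simp
    rw [Hseq_eq_getD x (m + 2) _ hb, hsplit]
    have hl : (Hword ((List.range m).map x)).length + 1
        = (Hword ((List.range m).map x) ++ [false]).length := by simp
    rw [hl, getD_append_cons]
    rfl

/-- The prefix of `Hseq x` of length `|Hword w| + 1` is `Hword w ++ [0]`. -/
lemma Hseq_prefix (x : ℕ → Bool) (m : ℕ) :
    (List.range ((Hword ((List.range m).map x)).length + 1)).map (Hseq x)
      = Hword ((List.range m).map x) ++ [false] := by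
  apply List.ext_getElem (by simp)
  intro i h1 h2
  simp only [List.getElem_map, List.getElem_range]
  by_cases hi : i < (Hword ((List.range m).map x)).length
  · rw [Hseq_eq_getD x m i hi, List.getElem_append_left hi, List.getD_eq_getElem _ _ hi]
  · have hie : i = (Hword ((List.range m).map x)).length := by
      simp at h1; omega
    subst hie
    rw [Hseq_at_len]
    rw [List.getElem_append_right (le_refl _)]
    simp

lemma Hword_iter_append (n : ℕ) (u v : List Bool) :
    Hword^[n] (u ++ v) = Hword^[n] u ++ Hword^[n] v := by
  induction n with
  | zero => rfl
  | succ n ih =>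
    rw [Function.iterate_succ_apply', Function.iterate_succ_apply',
      Function.iterate_succ_apply', ih, Hword_append]

lemma fibP_rec (n : ℕ) : fibP (n + 4) = fibP (n + 3) + fibP (n + 2) := by
  show fibP (n + 2 + 2) = _
  rw [fibP]

lemma fibP_rec' (n : ℕ) : fibP (n + 5) = fibP (n + 4) + fibP (n + 3) := by
  show fibP (n + 3 + 2) = _
  rw [fibP]

lemma Hword_iter_len : ∀ n : ℕ,
    (Hword^[n] [false]).length = fibP (n + 3) ∧ (Hword^[n] [true]).length = fibP (n + 2) := by
  intro n
  induction n with
  | zero => exact ⟨rfl, rfl⟩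
  | succ n ih =>
    constructor
    · have h : Hword^[n + 1] [false] = Hword^[n] [false] ++ Hword^[n] [true] := by
        rw [Function.iterate_succ_apply]
        show Hword^[n] ([false] ++ [true]) = _
        rw [Hword_iter_append]
      have h2 : fibP (n + 1 + 3) = fibP (n + 3) + fibP (n + 2) := fibP_rec n
      rw [h, List.length_append, ih.1, ih.2, h2]
    · rw [Function.iterate_succ_apply]
      exact ih.1

lemma fibP_two_le : ∀ n : ℕ, 2 ≤ fibP (n + 4)
  | 0 => by norm_num [fibP]
  | n + 1 => by
    have h1 := fibP_two_le n
    have h2 : fibP (n + 1 + 4) = fibP (n + 4) + fibP (n + 3) := fibP_rec' n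
    omega

lemma getD_range_map (f : ℕ → Bool) (M i : ℕ) (h : i < M) :
    ((List.range M).map f).getD i false = f i := by
  have hlen : i < ((List.range M).map f).length := by simpa using h
  rw [List.getD_eq_getElem _ _ hlen]
  simp

/-- if `x` and `y` have maximal common prefix `w` (of length `m`), then
`H^n(x)` and `H^n(y)` agree on exactly their first `|H^n(w)| + F_{n+2} - 2` symbols
(recall `fibP (n+4) = F_{n+2}`). -/
theorem Hn_agreement (x y : ℕ → Bool) (m : ℕ)
    (hagree : ∀ i < m, x i = y i) (hdiff : x m ≠ y m) (n : ℕ) :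
    (∀ i < (Hword^[n] ((List.range m).map x)).length + fibP (n + 4) - 2,
        Hseq^[n] x i = Hseq^[n] y i) ∧
    Hseq^[n] x ((Hword^[n] ((List.range m).map x)).length + fibP (n + 4) - 2)
      ≠ Hseq^[n] y ((Hword^[n] ((List.range m).map x)).length + fibP (n + 4) - 2) := by
  induction n generalizing x y m with
  | zero =>
    have h4 : fibP 4 = 2 := rfl
    simp only [Function.iterate_zero, id_eq, List.length_map, List.length_range, h4]
    have hm : m + 2 - 2 = m := by omega
    rw [hm]
    exact ⟨hagree, hdiff⟩
  | succ n ih =>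
    -- same prefixes
    have hpref : (List.range m).map y = (List.range m).map x := by
      apply List.map_congr_left
      intro i hi
      exact (hagree i (by simpa using hi)).symm
    have hx1 := Hseq_prefix x m
    have hy1 := Hseq_prefix y m
    rw [hpref] at hy1
    have hA : ∀ i < (Hword ((List.range m).map x)).length + 1, Hseq x i = Hseq y i := by
      intro i hi
      rw [← getD_range_map (Hseq x) _ i hi, ← getD_range_map (Hseq y) _ i hi, hx1, hy1]
    have hD : Hseq x ((Hword ((List.range m).map x)).length + 1)
        ≠ Hseq y ((Hword ((List.range m).map x)).length + 1) := by
      have hx2 := Hseq_at_len_succ x m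
      have hy2 := Hseq_at_len_succ y m
      rw [hpref] at hy2
      rw [hx2, hy2]
      intro hc
      exact hdiff (by cases hx : x m <;> cases hy : y m <;> simp [hx, hy] at hc ⊢)
    have IH := ih (Hseq x) (Hseq y) ((Hword ((List.range m).map x)).length + 1) hA hD
    have hplen :
        (Hword^[n] ((List.range ((Hword ((List.range m).map x)).length + 1)).map (Hseq x))).length
        = (Hword^[n + 1] ((List.range m).map x)).length + fibP (n + 3) := by
      rw [hx1, Hword_iter_append, List.length_append, (Hword_iter_len n).1,
        Function.iterate_succ_apply]
    have hfib : fibP (n + 1 + 4) = fibP (n + 4) + fibP (n + 3) := fibP_rec' n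
    have h2 : 2 ≤ fibP (n + 4) := fibP_two_le n
    have hidx : (Hword^[n + 1] ((List.range m).map x)).length + fibP (n + 1 + 4) - 2
        = (Hword^[n] ((List.range ((Hword ((List.range m).map x)).length + 1)).map
            (Hseq x))).length + fibP (n + 4) - 2 := by
      rw [hplen]
      omega
    rw [hidx, Function.iterate_succ_apply Hseq n x, Function.iterate_succ_apply Hseq n y]
    exact IH
end

section
/- Let ρ be the unique fixed point of the Fibonacci substitution H (an infinite sequence starting with 0). If x is an infinite binary sequence starting with 0, then H^n(x) and ρ agree on at least their first F_{n+3}−2 symbols; if x starts with 1, then H^n(x) and ρ agree on at least their first F_{n+2}−2 symbols. -/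
/-- Concatenate a finite word in front of an infinite sequence. -/
def wcat (w : List Bool) (s : ℕ → Bool) : ℕ → Bool :=
  fun n => if n < w.length then w.getD n false else s (n - w.length)

lemma le_length_Hword (w : List Bool) : w.length ≤ (Hword w).length := by
  induction w with
  | nil => simp [Hword]
  | cons a t ih => cases a <;> simp [Hword] <;> omega

lemma Hseq_eq (x : ℕ → Bool) {n m : ℕ} (h : n < m) :
    Hseq x n = (Hword ((List.range m).map x)).getD n false := by
  obtain ⟨k, rfl⟩ : ∃ k, m = (n + 1) + k := ⟨m - (n + 1), by omega⟩
  rw [List.range_add, List.map_append, Hword_append]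
  have hn : n < (Hword ((List.range (n + 1)).map x)).length :=
    lt_of_lt_of_le (by simp) (le_length_Hword _)
  rw [List.getD_append _ _ _ _ hn]
  rfl

lemma Hseq_wcat (w : List Bool) (s : ℕ → Bool) :
    Hseq (wcat w s) = wcat (Hword w) (Hseq s) := by
  funext n
  have h1 : n < w.length + (n + 1) := by omega
  rw [Hseq_eq (wcat w s) h1]
  have hsplit : (List.range (w.length + (n + 1))).map (wcat w s)
      = w ++ (List.range (n + 1)).map s := by
    rw [List.range_add, List.map_append, List.map_map]
    congr 1
    · apply List.ext_getElem
      · simp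
      · intro k h1 h2
        simp only [List.length_map, List.length_range] at h1
        simp [wcat, h1, List.getD_eq_getElem]
    · apply List.map_congr_left
      intro a ha
      simp [wcat, Function.comp]
  rw [hsplit, Hword_append]
  by_cases hc : n < (Hword w).length
  · rw [List.getD_append _ _ _ _ hc]
    simp [wcat, hc]
  · push_neg at hc
    rw [List.getD_append_right _ _ _ _ hc]
    have h2 : n - (Hword w).length < n + 1 := by omega
    rw [wcat, if_neg (by omega)]
    rw [Hseq_eq s h2]

lemma Hseq_iterate_wcat : ∀ (n : ℕ) (w : List Bool) (s : ℕ → Bool),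
    Hseq^[n] (wcat w s) = wcat (Hword^[n] w) (Hseq^[n] s) := by
  intro n
  induction n with
  | zero => intro w s; simp
  | succ n ih =>
      intro w s
      rw [Function.iterate_succ_apply, Hseq_wcat, ih (Hword w) (Hseq s),
        ← Function.iterate_succ_apply, ← Function.iterate_succ_apply]

lemma Hword_iterate_append : ∀ (n : ℕ) (u v : List Bool),
    Hword^[n] (u ++ v) = Hword^[n] u ++ Hword^[n] v := by
  intro n
  induction n with
  | zero => intro u v; simp
  | succ n ih =>
      intro u v
      rw [Function.iterate_succ_apply, Hword_append, ih,
        ← Function.iterate_succ_apply, ← Function.iterate_succ_apply]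

lemma Hseq_zero (x : ℕ → Bool) : Hseq x 0 = false := by
  show (Hword ((List.range 1).map x)).getD 0 false = false
  have : (List.range 1).map x = [x 0] := by rfl
  rw [this]
  cases x 0 <;> rfl

lemma wcat_head (x : ℕ → Bool) : x = wcat [x 0] (shift x) := by
  funext n
  cases n with
  | zero => simp [wcat]
  | succ k => simp [wcat, shift]

lemma Hword_iterate_len (n : ℕ) :
    (Hword^[n] [false]).length = fibP (n + 3) ∧
    (Hword^[n] [true]).length = fibP (n + 2) := by
  induction n with
  | zero => simp [fibP]
  | succ n ih =>
      obtain ⟨h1, h2⟩ := ih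
      constructor
      · rw [Function.iterate_succ_apply]
        have he : Hword [false] = [false] ++ [true] := rfl
        rw [he, Hword_iterate_append, List.length_append, h1, h2]
        show fibP (n + 3) + fibP (n + 2) = fibP (n + 4)
        rfl
      · rw [Function.iterate_succ_apply]
        show (Hword^[n] [false]).length = fibP (n + 3)
        exact h1

lemma zeroAux (n : ℕ)
    (h : ∀ u v : ℕ → Bool, ∀ i < fibP (n + 4) - 2, Hseq^[n] u i = Hseq^[n] v i) :
    ∀ u v : ℕ → Bool, u 0 = false → v 0 = false →
      ∀ i < fibP (n + 5) - 2, Hseq^[n] u i = Hseq^[n] v i := by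
  intro u v hu hv i hi
  have hL : (Hword^[n] [false]).length = fibP (n + 3) := (Hword_iterate_len n).1
  have hrw : ∀ y : ℕ → Bool, y 0 = false →
      Hseq^[n] y = wcat (Hword^[n] [false]) (Hseq^[n] (shift y)) := by
    intro y hy
    conv_lhs => rw [wcat_head y, hy]
    exact Hseq_iterate_wcat n [false] (shift y)
  rw [hrw u hu, hrw v hv]
  unfold wcat
  by_cases hc : i < (Hword^[n] [false]).length
  · rw [if_pos hc, if_pos hc]
  · rw [if_neg hc, if_neg hc]
    apply h
    have e5 : fibP (n + 5) = fibP (n + 4) + fibP (n + 3) := rfl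
    omega

lemma anyLem : ∀ n : ℕ, ∀ u v : ℕ → Bool, ∀ i < fibP (n + 4) - 2,
    Hseq^[n] u i = Hseq^[n] v i := by
  intro n
  induction n with
  | zero =>
      intro u v i hi
      have : fibP (0 + 4) = 2 := rfl
      omega
  | succ n ih =>
      intro u v i hi
      rw [Function.iterate_succ_apply, Function.iterate_succ_apply]
      exact zeroAux n ih (Hseq u) (Hseq v) (Hseq_zero u) (Hseq_zero v) i hi


/-- if `x` starts with `0` then `H^n(x)` agrees with `ρ` on at least the first
`F_{n+3} - 2 = fibP (n+5) - 2` symbols; if `x` starts with `1`, on at least the first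
`F_{n+2} - 2 = fibP (n+4) - 2` symbols. -/
theorem Hn_agrees_with_rho (ρ : ℕ → Bool) (hρ : Hseq ρ = ρ)
    (x : ℕ → Bool) (n : ℕ) :
    (x 0 = false → ∀ i < fibP (n + 5) - 2, Hseq^[n] x i = ρ i) ∧
    (x 0 = true → ∀ i < fibP (n + 4) - 2, Hseq^[n] x i = ρ i) := by
  have hfix : Hseq^[n] ρ = ρ := Function.iterate_fixed hρ n
  have hρ0 : ρ 0 = false := by rw [← hρ]; exact Hseq_zero ρ
  constructor
  · intro hx i hi
    have := zeroAux n (anyLem n) x ρ hx hρ0 i hi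
    rwa [hfix] at this
  · intro _ i hi
    have := anyLem n x ρ i hi
    rwa [hfix] at this
end
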